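/- Let G be a connected P4-free graph with at least two vertices and let Z be an independent set of vertices of G. Then there exists a vertex u not in Z that is adjacent to every vertex of Z. -/

import Mathlib

open SimpleGraph

lemma p4_aux {V : Type*} {G : SimpleGraph V} (hfree : IsEmpty (pathGraph 4 ↪g G))
    {a b c d : V} (hab : G.Adj a b) (hbc : G.Adj b c) (hcd : G.Adj c d)
    (nac : ¬ G.Adj a c) (nbd : ¬ G.Adj b d) (nad : ¬ G.Adj a d) : False := by
  have nca : ¬ G.Adj c a := fun h => nac h.symm
  have ndb : ¬ G.Adj d b := fun h => nbd h.symm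
  have nda : ¬ G.Adj d a := fun h => nad h.symm
  have e1 : a ≠ b := hab.ne
  have e2 : b ≠ c := hbc.ne
  have e3 : c ≠ d := hcd.ne
  have e4 : a ≠ c := by rintro rfl; exact nad hcd
  have e5 : a ≠ d := by rintro rfl; exact nac hcd.symm
  have e6 : b ≠ d := by rintro rfl; exact nad hab
  refine hfree.elim ⟨⟨![a,b,c,d], ?_⟩, ?_⟩
  · intro i j h
    fin_cases i <;> fin_cases j <;>
      first
        | rfl
        | exact absurd h e1
        | exact absurd h e2
        | exact absurd h e3
        | exact absurd h e4
        | exact absurd h e5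
        | exact absurd h e6
        | exact absurd h.symm e1
        | exact absurd h.symm e2
        | exact absurd h.symm e3
        | exact absurd h.symm e4
        | exact absurd h.symm e5
        | exact absurd h.symm e6
  · intro i j
    fin_cases i <;> fin_cases j <;>
      simp [pathGraph_adj, hab, hbc, hcd, hab.symm, hbc.symm, hcd.symm,
        nac, nbd, nad, nca, ndb, nda, G.irrefl] <;>
        first | exact hab | exact hbc | exact hcd | exact hab.symm | exact hbc.symm | exact hcd.symm | exact nac | exact nbd | exact nad | exact nca | exact ndb | exact nda

lemma dist_two {V : Type*} {G : SimpleGraph V} (hfree : IsEmpty (pathGraph 4 ↪g G))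
    {x y : V} (p : G.Walk x y) (hne : x ≠ y) (hnadj : ¬ G.Adj x y) :
    ∃ w, G.Adj x w ∧ G.Adj w y := by
  induction p with
  | nil => exact absurd rfl hne
  | @cons x a y h q ih =>
    by_cases hay : a = y
    · exact absurd (hay ▸ h) hnadj
    by_cases haadj : G.Adj a y
    · exact ⟨a, h, haadj⟩
    obtain ⟨b, hab, hby⟩ := ih hay haadj
    by_cases hxb : G.Adj x b
    · exact ⟨b, hxb, hby⟩
    · exact absurd (p4_aux hfree h hab hby hxb haadj hnadj) id

/-- If `G` is a connected `P₄`-free graph with at least two vertices and `Z` is an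
independent set of vertices of `G`, then there is a vertex `u ∉ Z` adjacent to every
vertex of `Z`. -/
theorem stmt_1 {V : Type*} [Fintype V] (G : SimpleGraph V)
    (hconn : G.Connected)
    (hfree : IsEmpty (pathGraph 4 ↪g G))
    (hcard : 2 ≤ Fintype.card V)
    (Z : Set V) (hZ : Z.Pairwise fun a b => ¬ G.Adj a b) :
    ∃ u : V, u ∉ Z ∧ ∀ z ∈ Z, G.Adj u z := by
  classical
  -- the set of candidates outside Z is nonempty
  have hS : ∃ u : V, u ∉ Z := by
    by_cases hZe : Z = ∅
    · have : Nonempty V := Fintype.card_pos_iff.mp (by omega)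
      exact ⟨this.some, by simp [hZe]⟩
    · obtain ⟨z, hz⟩ := Set.nonempty_iff_ne_empty.mpr hZe
      obtain ⟨y, hy⟩ := Fintype.exists_ne_of_one_lt_card (by omega) z
      obtain ⟨p⟩ := hconn.preconnected z y
      have hlen : 0 < p.length := by
        rcases p with _ | _
        · exact absurd rfl hy
        · simp [SimpleGraph.Walk.length_cons]
      have hadj : G.Adj z (p.getVert 1) := by simpa using p.adj_getVert_succ hlen
      refine ⟨p.getVert 1, fun hw => ?_⟩
      exact hZ hz hw hadj.ne hadj
  -- pick u ∉ Z maximizing the number of neighbors in Z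
  set f : V → ℕ := fun u => (Finset.univ.filter fun z => z ∈ Z ∧ G.Adj u z).card with hf
  obtain ⟨u₀, hu₀⟩ := hS
  obtain ⟨u, hu, hmax⟩ := Finset.exists_max_image (Finset.univ.filter fun v => v ∉ Z) f
    ⟨u₀, by simpa using hu₀⟩
  simp only [Finset.mem_filter, Finset.mem_univ, true_and] at hu
  refine ⟨u, hu, fun z hz => ?_⟩
  by_contra huz
  have hneuz : u ≠ z := fun h => hu (h ▸ hz)
  obtain ⟨p⟩ := hconn.preconnected u z
  obtain ⟨w, huw, hwz⟩ := dist_two hfree p hneuz huz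
  have hwZ : w ∉ Z := fun hw => hZ hw hz hwz.ne hwz
  have hle : f w ≤ f u := hmax w (by simpa using hwZ)
  -- there must be y ∈ Z adjacent to u but not to w
  have : ∃ y, y ∈ Z ∧ G.Adj u y ∧ ¬ G.Adj w y := by
    by_contra hcon
    push_neg at hcon
    have hss : (Finset.univ.filter fun y => y ∈ Z ∧ G.Adj u y) ⊂
        (Finset.univ.filter fun y => y ∈ Z ∧ G.Adj w y) := by
      refine ⟨fun y hy => ?_, fun hsub => ?_⟩
      · simp only [Finset.mem_filter, Finset.mem_univ, true_and] at hy ⊢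
        exact ⟨hy.1, hcon y hy.1 hy.2⟩
      · have hzmem : z ∈ (Finset.univ.filter fun y => y ∈ Z ∧ G.Adj w y) := by
          simp [hz, hwz]
        have := hsub hzmem
        simp only [Finset.mem_filter, Finset.mem_univ, true_and] at this
        exact huz this.2
    exact absurd (Finset.card_lt_card hss) (by simpa [hf] using hle : f w ≤ f u).not_gt
  obtain ⟨y, hyZ, huy, hwy⟩ := this
  have hyz : y ≠ z := fun h => huz (h ▸ huy)
  have hnyz : ¬ G.Adj y z := hZ hyZ hz hyz
  exact p4_aux hfree huy.symm huw hwz (fun h => hwy h.symm) huz hnyz
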